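/- Let X be a measurable space, κ a Markov kernel from X to X, and let c, u : X → [0,+∞] be measurable and w ∈ [0,+∞] be such that c(x) + ∫_X u(y) κ(x)(dy) ≤ w + u(x) for all x ∈ X. Fix x ∈ X and define probability measures μ_0 := δ_x and μ_{t+1} := bind of μ_t along κ (i.e., μ_{t+1}(B) = ∫_X κ(y)(B) μ_t(dy)). Then for every n ≥ 1, Σ_{t=0}^{n−1} ∫_X c dμ_t ≤ n·w + u(x); consequently, if u(x) < +∞, then limsup_{n→∞} (1/n) Σ_{t=0}^{n−1} ∫_X c dμ_t ≤ w. -/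

import Mathlib

open MeasureTheory ProbabilityTheory Filter Topology
open scoped ENNReal

noncomputable section

/-- The distribution of the state at time `t` of the Markov chain with transition kernel
`κ` started at `x`: `μ_0 = δ_x` and `μ_{t+1} = μ_t.bind κ`. -/
def chainMeas {X : Type*} [MeasurableSpace X] (κ : Kernel X X) (x : X) :
    ℕ → Measure X
  | 0 => Measure.dirac x
  | (t + 1) => (chainMeas κ x t).bind fun y => κ y

instance chainMeas_prob {X : Type*} [MeasurableSpace X] (κ : Kernel X X)
    [IsMarkovKernel κ] (x : X) (n : ℕ) : IsProbabilityMeasure (chainMeas κ x n) := by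
  induction n with
  | zero => exact Measure.dirac.isProbabilityMeasure
  | succ t ih =>
    constructor
    rw [chainMeas, Measure.bind_apply MeasurableSet.univ κ.measurable.aemeasurable]
    simp [measure_univ]

theorem lintegral_chainMeas_succ {X : Type*} [MeasurableSpace X] (κ : Kernel X X)
    (x : X) (t : ℕ) {f : X → ℝ≥0∞} (hf : Measurable f) :
    ∫⁻ y, f y ∂(chainMeas κ x (t + 1)) = ∫⁻ a, ∫⁻ y, f y ∂(κ a) ∂(chainMeas κ x t) := by
  rw [chainMeas, Measure.lintegral_bind κ.measurable.aemeasurable hf.aemeasurable]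

/-- Let `κ` be a Markov kernel on `X`, `c u : X → [0,+∞]` measurable,
and `w ∈ [0,+∞]` with `c(x) + ∫ u dκ(x) ≤ w + u(x)` for all `x`. Fix `x`, and let
`μ_t` be the distribution at time `t` of the chain started at `x`. Then for all `n ≥ 1`,
`∑_{t<n} ∫ c dμ_t ≤ n·w + u(x)`; consequently, if `u(x) < +∞`, then
`limsup_n (1/n) ∑_{t<n} ∫ c dμ_t ≤ w`. -/
theorem statement12 {X : Type*} [MeasurableSpace X] (κ : Kernel X X)
    [IsMarkovKernel κ] (c u : X → ℝ≥0∞) (hc : Measurable c) (hu : Measurable u)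
    (w : ℝ≥0∞) (h : ∀ x : X, c x + ∫⁻ y, u y ∂ (κ x) ≤ w + u x) (x : X) :
    (∀ n : ℕ, 1 ≤ n →
      ∑ t ∈ Finset.range n, ∫⁻ y, c y ∂ (chainMeas κ x t) ≤ (n : ℝ≥0∞) * w + u x)
    ∧ (u x < ⊤ →
      Filter.limsup (fun n : ℕ =>
          ((n : ℝ≥0∞))⁻¹ * ∑ t ∈ Finset.range n, ∫⁻ y, c y ∂ (chainMeas κ x t)) atTop
        ≤ w) := by
  have key : ∀ n : ℕ,
      (∑ t ∈ Finset.range n, ∫⁻ y, c y ∂ (chainMeas κ x t))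
        + ∫⁻ y, u y ∂ (chainMeas κ x n) ≤ (n : ℝ≥0∞) * w + u x := by
    intro n
    induction n with
    | zero => simp [chainMeas, lintegral_dirac' _ hu]
    | succ n ih =>
      rw [Finset.sum_range_succ, lintegral_chainMeas_succ κ x n hu]
      calc (∑ t ∈ Finset.range n, ∫⁻ y, c y ∂ (chainMeas κ x t))
            + ∫⁻ y, c y ∂ (chainMeas κ x n)
            + ∫⁻ a, ∫⁻ y, u y ∂(κ a) ∂(chainMeas κ x n)
          = (∑ t ∈ Finset.range n, ∫⁻ y, c y ∂ (chainMeas κ x t))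
            + ∫⁻ a, c a + ∫⁻ y, u y ∂(κ a) ∂(chainMeas κ x n) := by
            rw [lintegral_add_left hc, add_assoc]
        _ ≤ (∑ t ∈ Finset.range n, ∫⁻ y, c y ∂ (chainMeas κ x t))
            + ∫⁻ a, w + u a ∂(chainMeas κ x n) := by
            exact add_le_add le_rfl (lintegral_mono fun a => h a)
        _ = (∑ t ∈ Finset.range n, ∫⁻ y, c y ∂ (chainMeas κ x t))
            + (w + ∫⁻ a, u a ∂(chainMeas κ x n)) := by
            rw [lintegral_add_left measurable_const, lintegral_const, measure_univ, mul_one]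
        _ = w + ((∑ t ∈ Finset.range n, ∫⁻ y, c y ∂ (chainMeas κ x t))
            + ∫⁻ a, u a ∂(chainMeas κ x n)) := by ring
        _ ≤ w + ((n : ℝ≥0∞) * w + u x) := by gcongr
        _ = ((n : ℝ≥0∞) + 1) * w + u x := by ring
        _ = ((n + 1 : ℕ) : ℝ≥0∞) * w + u x := by push_cast; ring
  have key' : ∀ n : ℕ, 1 ≤ n →
      ∑ t ∈ Finset.range n, ∫⁻ y, c y ∂ (chainMeas κ x t) ≤ (n : ℝ≥0∞) * w + u x :=
    fun n _ => le_trans (le_add_right le_rfl) (key n)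
  refine ⟨key', fun hux => ?_⟩
  have hle : ∀ᶠ n : ℕ in atTop,
      ((n : ℝ≥0∞))⁻¹ * ∑ t ∈ Finset.range n, ∫⁻ y, c y ∂ (chainMeas κ x t)
        ≤ w + ((n : ℝ≥0∞))⁻¹ * u x := by
    filter_upwards [eventually_ge_atTop 1] with n hn
    have hn0 : (n : ℝ≥0∞) ≠ 0 := by exact_mod_cast Nat.one_le_iff_ne_zero.mp hn
    calc ((n : ℝ≥0∞))⁻¹ * ∑ t ∈ Finset.range n, ∫⁻ y, c y ∂ (chainMeas κ x t)
        ≤ ((n : ℝ≥0∞))⁻¹ * ((n : ℝ≥0∞) * w + u x) := by gcongr; exact key' n hn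
      _ = ((n : ℝ≥0∞))⁻¹ * (n : ℝ≥0∞) * w + ((n : ℝ≥0∞))⁻¹ * u x := by ring
      _ = w + ((n : ℝ≥0∞))⁻¹ * u x := by
          rw [ENNReal.inv_mul_cancel hn0 (ENNReal.natCast_ne_top n), one_mul]
  have htend : Tendsto (fun n : ℕ => w + ((n : ℝ≥0∞))⁻¹ * u x) atTop (𝓝 (w + 0)) := by
    refine Tendsto.const_add w ?_
    have : Tendsto (fun n : ℕ => ((n : ℝ≥0∞))⁻¹ * u x) atTop (𝓝 (0 * u x)) :=
      ENNReal.Tendsto.mul_const ENNReal.tendsto_inv_nat_nhds_zero (Or.inr hux.ne)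
    simpa using this
  calc Filter.limsup (fun n : ℕ =>
        ((n : ℝ≥0∞))⁻¹ * ∑ t ∈ Finset.range n, ∫⁻ y, c y ∂ (chainMeas κ x t)) atTop
      ≤ Filter.limsup (fun n : ℕ => w + ((n : ℝ≥0∞))⁻¹ * u x) atTop :=
        Filter.limsup_le_limsup hle
    _ = w + 0 := htend.limsup_eq
    _ = w := add_zero w
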